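/- Let x be the characteristic vector of a vertex of the Schrijver graph S(n,k), and let r be the number of distinct cyclic shifts of x. Then the sequence (x, σ(x), σ²(x), ..., σ^{r−1}(x)) is a cycle in S(n,k): consecutive strings are adjacent, σ^{r−1}(x) is adjacent to x, and all r strings are pairwise distinct. -/
import Mathlib


/-- Cyclic right shift of a bitstring of length `n` by one position: `σ(x)_i = x_{i-1}`. -/
def shift {n : ℕ} (x : ZMod n → Bool) : ZMod n → Bool := fun i => x (i - 1)

/-- Cyclic left shift, i.e. `σ⁻¹`: `σ⁻¹(x)_i = x_{i+1}`. -/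
def unshift {n : ℕ} (x : ZMod n → Bool) : ZMod n → Bool := fun i => x (i + 1)

/-- A vertex of the Schrijver graph `S(n,k)` in bitstring form: a binary string of length `n`
with exactly `k` ones and no two ones cyclically adjacent. -/
def IsSchrijverVertex (n k : ℕ) (x : ZMod n → Bool) : Prop :=
  Set.ncard {i : ZMod n | x i = true} = k ∧ ∀ i : ZMod n, x i = true → x (i + 1) = false

/-- Adjacency in the (Schrijver/Kneser) graph: the sets of 1-positions are disjoint
(and the strings are distinct). -/
def SAdj {n : ℕ} (x y : ZMod n → Bool) : Prop :=
  x ≠ y ∧ ∀ i : ZMod n, ¬(x i = true ∧ y i = true)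

/-- The necklace of `x`: the set of all cyclic shifts of `x`. -/
def neck {n : ℕ} (x : ZMod n → Bool) : Set (ZMod n → Bool) :=
  {y | ∃ i : ℕ, shift^[i] x = y}

lemma shift_iter {n : ℕ} (x : ZMod n → Bool) (m : ℕ) (j : ZMod n) :
    shift^[m] x j = x (j - (m : ZMod n)) := by
  induction m generalizing x with
  | zero => simp
  | succ m ih =>
      rw [Function.iterate_succ_apply, ih (shift x)]
      show x (j - (m : ZMod n) - 1) = x (j - ((m + 1 : ℕ) : ZMod n))
      congr 1
      push_cast
      ring

lemma unshift_shift {n : ℕ} (x : ZMod n → Bool) : unshift (shift x) = x := by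
  funext i; simp [shift, unshift]

lemma shift_injective {n : ℕ} :
    Function.Injective (shift : (ZMod n → Bool) → (ZMod n → Bool)) :=
  Function.LeftInverse.injective unshift_shift

lemma no_period_two (n k : ℕ) (hk : 1 ≤ k) (hn : 2 * k + 1 ≤ n)
    (x : ZMod n → Bool) (hx : IsSchrijverVertex n k x)
    (h2 : shift^[2] x = x) : False := by
  have hn0 : 0 < n := by omega
  haveI : NeZero n := ⟨by omega⟩
  obtain ⟨hxk, hadj⟩ := hx
  have hex : ∃ i, x i = true := by
    by_contra h
    push_neg at h
    have he : {i : ZMod n | x i = true} = ∅ := by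
      ext i; simp [h i]
    rw [he] at hxk
    simp at hxk
    omega
  obtain ⟨i, hi⟩ := hex
  have hstep : ∀ j : ZMod n, x (j + 2) = x j := by
    intro j
    have h := congrFun h2 (j + 2)
    rw [shift_iter] at h
    have : (j + 2 - ((2 : ℕ) : ZMod n)) = j := by push_cast; ring
    rw [this] at h
    exact h.symm
  have hA : ∀ m : ℕ, x (i + ((2 * m : ℕ) : ZMod n)) = true := by
    intro m
    induction m with
    | zero => simpa using hi
    | succ m ih =>
        have he : (i + ((2 * (m + 1) : ℕ) : ZMod n)) = (i + ((2 * m : ℕ) : ZMod n)) + 2 := by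
          push_cast; ring
        rw [he, hstep]
        exact ih
  have hB : ∀ j : ZMod n, x j = true ∨ x (j + 1) = true := by
    intro j
    obtain ⟨m, hm⟩ : ∃ m : ℕ, (m : ZMod n) = j - i := ZMod.natCast_zmod_surjective (j - i)
    have hj : j = i + (m : ZMod n) := by rw [hm]; ring
    rcases Nat.even_or_odd m with ⟨t, ht⟩ | ⟨t, ht⟩
    · left
      have : j = i + ((2 * t : ℕ) : ZMod n) := by rw [hj, ht]; push_cast; ring
      rw [this]; exact hA t
    · right
      have : j + 1 = i + ((2 * (t + 1) : ℕ) : ZMod n) := by rw [hj, ht]; push_cast; ring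
      rw [this]; exact hA (t + 1)
  set S : Set (ZMod n) := {i | x i = true} with hS
  have hT : Set.ncard ((fun a => a - 1) '' S) = k := by
    rw [Set.ncard_image_of_injective _ sub_left_injective]
    exact hxk
  have hdisj : Disjoint S ((fun a => a - 1) '' S) := by
    rw [Set.disjoint_left]
    rintro a ha ⟨b, hb, rfl⟩
    simp only [hS, Set.mem_setOf_eq] at ha hb
    have h := hadj (b - 1) ha
    rw [sub_add_cancel, hb] at h
    simp at h
  have hunion : S ∪ ((fun a => a - 1) '' S) = Set.univ := by
    ext j
    simp only [Set.mem_union, Set.mem_univ, iff_true]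
    rcases hB j with h | h
    · left; exact h
    · right; exact ⟨j + 1, h, by simp⟩
  have h1 : (Set.univ : Set (ZMod n)).ncard = n := by
    rw [Set.ncard_univ, Nat.card_zmod]
  rw [← hunion, Set.ncard_union_eq hdisj (Set.toFinite _) (Set.toFinite _), hxk, hT] at h1
  omega

/-- for a Schrijver vertex `x` with `r` distinct cyclic shifts, the sequence
`(x, σ(x), …, σ^{r-1}(x))` is a cycle in `S(n,k)`: consecutive strings are adjacent,
the last one is adjacent to the first, all `r` strings are pairwise distinct, and `r ≥ 3`. -/
theorem schrijver_shift_cycle (n k : ℕ) (hk : 1 ≤ k) (hn : 2 * k + 1 ≤ n)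
    (x : ZMod n → Bool) (hx : IsSchrijverVertex n k x) (r : ℕ) (hr : r = (neck x).ncard) :
    3 ≤ r ∧
    (∀ i : ℕ, i + 1 < r → SAdj (shift^[i] x) (shift^[i + 1] x)) ∧
    SAdj (shift^[r - 1] x) x ∧
    (∀ i j : ℕ, i < r → j < r → i ≠ j → shift^[i] x ≠ shift^[j] x) := by
  have hn0 : 0 < n := by omega
  haveI : NeZero n := ⟨by omega⟩
  have h2 : ¬ (shift^[2] x = x) := fun h => no_period_two n k hk hn x hx h
  have hper : ∃ m, 0 < m ∧ shift^[m] x = x := by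
    refine ⟨n, hn0, ?_⟩
    funext j
    rw [shift_iter]
    simp
  set p := Nat.find hper with hpdef
  obtain ⟨hp0, hpfix⟩ : 0 < p ∧ shift^[p] x = x := Nat.find_spec hper
  have hpmin : ∀ m, 0 < m → m < p → shift^[m] x ≠ x := fun m hm hlt h =>
    Nat.find_min hper hlt ⟨hm, h⟩
  have hinj : ∀ m, Function.Injective (shift^[m] : (ZMod n → Bool) → (ZMod n → Bool)) :=
    fun m => shift_injective.iterate m
  have hdistaux : ∀ i j, i < j → j < p → shift^[i] x ≠ shift^[j] x := by
    intro i j hij hjp heq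
    have h1 : shift^[i] (shift^[j - i] x) = shift^[i] x := by
      rw [← Function.iterate_add_apply, show i + (j - i) = j from by omega]
      exact heq.symm
    exact hpmin (j - i) (by omega) (by omega) (hinj i h1)
  have hp1 : p ≠ 1 := by
    intro h
    apply h2
    have h1 : shift^[1] x = x := by rw [← h]; exact hpfix
    rw [show (2 : ℕ) = 1 + 1 from rfl, Function.iterate_add_apply, h1, h1]
  have hp2 : p ≠ 2 := fun h => h2 (h ▸ hpfix)
  have hp3 : 3 ≤ p := by omega
  have hmult : ∀ q : ℕ, shift^[p * q] x = x := by
    intro q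
    induction q with
    | zero => simp
    | succ q ih => rw [Nat.mul_succ, Function.iterate_add_apply, hpfix, ih]
  have hmod : ∀ m : ℕ, shift^[m] x = shift^[m % p] x := by
    intro m
    conv_lhs => rw [show m = m % p + p * (m / p) from (Nat.mod_add_div m p).symm]
    rw [Function.iterate_add_apply, hmult]
  have hneck : neck x = (fun i : ℕ => shift^[i] x) '' (Set.Iio p) := by
    ext y
    constructor
    · rintro ⟨m, rfl⟩
      exact ⟨m % p, Nat.mod_lt m hp0, (hmod m).symm⟩
    · rintro ⟨m, -, rfl⟩
      exact ⟨m, rfl⟩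
  have hrp : r = p := by
    have hio : (Set.Iio p : Set ℕ) = ↑(Finset.range p) := by
      ext m; simp
    rw [hr, hneck, Set.ncard_image_of_injOn, hio, Set.ncard_coe_finset, Finset.card_range]
    intro a ha b hb hab
    by_contra hne
    rcases lt_or_gt_of_ne hne with h | h
    · exact hdistaux a b h hb hab
    · exact hdistaux b a h ha hab.symm
  refine ⟨by omega, ?_, ?_, ?_⟩
  · intro i hi
    constructor
    · intro heq
      apply h2
      have hsx : x = shift x := by
        apply hinj i
        rw [← Function.iterate_succ_apply]
        exact heq
      rw [show (2 : ℕ) = 1 + 1 from rfl, Function.iterate_add_apply]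
      simp only [Function.iterate_one]
      rw [← hsx, ← hsx]
    · rintro j ⟨ha, hb⟩
      rw [shift_iter] at ha hb
      have hfalse := hx.2 (j - ((i + 1 : ℕ) : ZMod n)) hb
      have he : (j - ((i : ℕ) : ZMod n)) = j - ((i + 1 : ℕ) : ZMod n) + 1 := by
        push_cast; ring
      rw [he, hfalse] at ha
      exact Bool.false_ne_true ha
  · constructor
    · exact hpmin (r - 1) (by omega) (by omega)
    · rintro j ⟨ha, hb⟩
      rw [shift_iter] at ha
      have hjr : x (j - ((r : ℕ) : ZMod n)) = true := by
        have h := congrFun hpfix j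
        rw [shift_iter] at h
        rw [← hrp] at h
        rw [h]
        exact hb
      have hfalse := hx.2 (j - ((r : ℕ) : ZMod n)) hjr
      have he : (j - ((r - 1 : ℕ) : ZMod n)) = j - ((r : ℕ) : ZMod n) + 1 := by
        rw [Nat.cast_sub (by omega)]
        push_cast
        ring
      rw [he, hfalse] at ha
      exact Bool.false_ne_true ha
  · intro i j hi hj hne
    rcases lt_or_gt_of_ne hne with h | h
    · exact hdistaux i j h (by omega)
    · intro heq
      exact hdistaux j i h (by omega) heq.symm
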